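/- Let F be a filter of a basic pseudo hoop M. Then F is prime if and only if any two filters F₁, F₂ containing F are comparable (F₁ ⊆ F₂ or F₂ ⊆ F₁). Consequently the set of prime filters of M forms a root system. -/

import Mathlib

universe u

structure PseudoHoop (M : Type u) where
  mul : M → M → M
  one : M
  imp : M → M → M
  rimp : M → M → M
  mul_one : ∀ x, mul x one = x
  one_mul : ∀ x, mul one x = x
  imp_self : ∀ x, imp x x = one
  rimp_self : ∀ x, rimp x x = one
  mul_imp : ∀ x y z, imp (mul x y) z = imp x (imp y z)
  mul_rimp : ∀ x y z, rimp (mul x y) z = rimp y (rimp x z)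
  div1 : ∀ x y, mul (imp x y) x = mul (imp y x) y
  div2 : ∀ x y, mul (imp x y) x = mul x (rimp x y)
  div3 : ∀ x y, mul x (rimp x y) = mul y (rimp y x)

namespace PseudoHoop

variable {M : Type u} (H : PseudoHoop M)

/-- The induced order: x ≤ y iff x → y = 1. -/
def le (x y : M) : Prop := H.imp x y = H.one

/-- The derived meet: x ∧ y = (x → y) ⊙ x. -/
def meet (x y : M) : M := H.mul (H.imp x y) x

/-- Powers: a^0 = 1, a^(n+1) = a^n ⊙ a. -/
def pow (a : M) : ℕ → M
  | 0 => H.one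
  | n + 1 => H.mul (pow a n) a

/-- j is the least upper bound of x and y. -/
def IsJoin (x y j : M) : Prop :=
  H.le x j ∧ H.le y j ∧ ∀ c, H.le x c → H.le y c → H.le j c

/-- Prelinearity: (x→y) ∨ (y→x) and (x⇝y) ∨ (y⇝x) exist and equal 1. -/
def Prelinear : Prop :=
  ∀ x y, H.IsJoin (H.imp x y) (H.imp y x) H.one ∧ H.IsJoin (H.rimp x y) (H.rimp y x) H.one

/-- Basic pseudo hoop. -/
def Basic : Prop :=
  (∀ x y z, H.le (H.imp (H.imp x y) z) (H.imp (H.imp (H.imp y x) z) z)) ∧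
  (∀ x y z, H.le (H.rimp (H.rimp x y) z) (H.rimp (H.rimp (H.rimp y x) z) z))

/-- Filters: contain 1, closed under ⊙ and upward closed. -/
def IsFilter (F : Set M) : Prop :=
  H.one ∈ F ∧ (∀ x ∈ F, ∀ y ∈ F, H.mul x y ∈ F) ∧ (∀ x ∈ F, ∀ y, H.le x y → y ∈ F)

/-- Filter generated by a set. -/
def filterGen (S : Set M) : Set M := ⋂₀ {F | H.IsFilter F ∧ S ⊆ F}

/-- Prime filter. -/
def IsPrime (F : Set M) : Prop :=
  H.IsFilter F ∧
    ∀ F₁ F₂, H.IsFilter F₁ → H.IsFilter F₂ → F₁ ∩ F₂ ⊆ F → F₁ ⊆ F ∨ F₂ ⊆ F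

/-- V is a value of g: a filter maximal with respect to not containing g. -/
def IsValueOf (V : Set M) (g : M) : Prop :=
  H.IsFilter V ∧ g ∉ V ∧ ∀ W, H.IsFilter W → V ⊆ W → g ∉ W → W = V

/-- V is a value of M: a value of some g ≠ 1. -/
def IsValue (V : Set M) : Prop := ∃ g, g ≠ H.one ∧ H.IsValueOf V g

end PseudoHoop

namespace PseudoHoop

variable {M : Type u} (H : PseudoHoop M)

lemma hoop_imp_one_imp (x y : M) : H.imp H.one (H.imp x y) = H.imp x y := by
  have h := H.mul_imp H.one x y
  rw [H.one_mul] at h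
  exact h.symm

lemma hoop_rimp_one_rimp (x y : M) : H.rimp H.one (H.rimp x y) = H.rimp x y := by
  have h := H.mul_rimp x H.one y
  rw [H.mul_one] at h
  exact h.symm

lemma hoop_imp_imp_one (x y : M) : H.imp (H.imp x y) H.one = H.one := by
  set w := H.imp x y with hw
  have h1 : H.imp H.one w = w := H.hoop_imp_one_imp x y
  have h2 : H.mul (H.imp w H.one) w = H.imp H.one w := by
    rw [H.div1 w H.one, H.mul_one]
  calc H.imp w H.one = H.imp (H.imp H.one w) H.one := by rw [h1]
    _ = H.imp (H.mul (H.imp w H.one) w) H.one := by rw [h2]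
    _ = H.imp (H.imp w H.one) (H.imp w H.one) := H.mul_imp _ _ _
    _ = H.one := H.imp_self _

lemma hoop_rimp_rimp_one (x y : M) : H.rimp (H.rimp x y) H.one = H.one := by
  set w := H.rimp x y with hw
  have h1 : H.rimp H.one w = w := H.hoop_rimp_one_rimp x y
  have h2 : H.mul w (H.rimp w H.one) = H.rimp H.one w := by
    rw [H.div3 w H.one, H.one_mul]
  calc H.rimp w H.one = H.rimp (H.rimp H.one w) H.one := by rw [h1]
    _ = H.rimp (H.mul w (H.rimp w H.one)) H.one := by rw [h2]
    _ = H.rimp (H.rimp w H.one) (H.rimp w H.one) := H.mul_rimp _ _ _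
    _ = H.one := H.rimp_self _

lemma hoop_le_of_rle {a b : M} (h : H.rimp a b = H.one) : H.le a b := by
  have ha : a = H.mul (H.imp b a) b := by
    calc a = H.mul a (H.rimp a b) := by rw [h, H.mul_one]
      _ = H.mul b (H.rimp b a) := H.div3 a b
      _ = H.mul (H.imp b a) b := (H.div2 b a).symm
  show H.imp a b = H.one
  calc H.imp a b = H.imp (H.mul (H.imp b a) b) b := by rw [← ha]
    _ = H.imp (H.imp b a) (H.imp b b) := H.mul_imp _ _ _
    _ = H.imp (H.imp b a) H.one := by rw [H.imp_self]
    _ = H.one := H.hoop_imp_imp_one _ _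

lemma hoop_rle_of_le {a b : M} (h : H.le a b) : H.rimp a b = H.one := by
  have h' : H.imp a b = H.one := h
  have ha : a = H.mul b (H.rimp b a) := by
    calc a = H.mul (H.imp a b) a := by rw [h', H.one_mul]
      _ = H.mul a (H.rimp a b) := H.div2 a b
      _ = H.mul b (H.rimp b a) := H.div3 a b
  calc H.rimp a b = H.rimp (H.mul b (H.rimp b a)) b := by rw [← ha]
    _ = H.rimp (H.rimp b a) (H.rimp b b) := H.mul_rimp _ _ _
    _ = H.rimp (H.rimp b a) H.one := by rw [H.rimp_self]
    _ = H.one := H.hoop_rimp_rimp_one _ _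

lemma hoop_le_antisymm {a b : M} (h1 : H.le a b) (h2 : H.le b a) : a = b := by
  have h1' : H.imp a b = H.one := h1
  have h2' : H.imp b a = H.one := h2
  calc a = H.mul (H.imp a b) a := by rw [h1', H.one_mul]
    _ = H.mul (H.imp b a) b := H.div1 a b
    _ = b := by rw [h2', H.one_mul]

lemma hoop_one_rimp (x : M) : H.rimp H.one x = x := by
  have hle1 : H.le x (H.rimp H.one x) := by
    apply H.hoop_le_of_rle
    have h := H.mul_rimp H.one x x
    rw [H.one_mul, H.rimp_self] at h
    exact h.symm
  have heq : H.rimp H.one x = H.mul (H.imp x H.one) x := by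
    rw [H.div2 x H.one, H.div3 x H.one, H.one_mul]
  have hle2 : H.le (H.rimp H.one x) x := by
    show H.imp (H.rimp H.one x) x = H.one
    rw [heq, H.mul_imp, H.imp_self, H.hoop_imp_imp_one]
  exact H.hoop_le_antisymm hle2 hle1

lemma hoop_one_imp (x : M) : H.imp H.one x = x := by
  have h := H.div1 H.one x
  rw [H.mul_one] at h
  calc H.imp H.one x = H.mul (H.imp x H.one) x := h
    _ = H.mul x (H.rimp x H.one) := H.div2 x H.one
    _ = H.mul H.one (H.rimp H.one x) := H.div3 x H.one
    _ = H.rimp H.one x := H.one_mul _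
    _ = x := H.hoop_one_rimp x

lemma hoop_rimp_one (x : M) : H.rimp x H.one = H.one := by
  conv_lhs => rw [← H.hoop_one_rimp x]
  exact H.hoop_rimp_rimp_one _ _

lemma hoop_imp_one (x : M) : H.imp x H.one = H.one :=
  H.hoop_le_of_rle (H.hoop_rimp_one x)

lemma hoop_le_refl (x : M) : H.le x x := H.imp_self x

lemma hoop_le_one (x : M) : H.le x H.one := H.hoop_imp_one x

lemma hoop_le_trans {a b c : M} (h1 : H.le a b) (h2 : H.le b c) : H.le a c := by
  have h1' : H.imp a b = H.one := h1
  have h2' : H.imp b c = H.one := h2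
  have ha : a = H.mul (H.imp b a) b := by
    calc a = H.mul (H.imp a b) a := by rw [h1', H.one_mul]
      _ = H.mul (H.imp b a) b := H.div1 a b
  show H.imp a c = H.one
  calc H.imp a c = H.imp (H.mul (H.imp b a) b) c := by rw [← ha]
    _ = H.imp (H.imp b a) (H.imp b c) := H.mul_imp _ _ _
    _ = H.imp (H.imp b a) H.one := by rw [h2']
    _ = H.one := H.hoop_imp_one _

lemma hoop_resid {x y z : M} : H.le (H.mul x y) z ↔ H.le x (H.imp y z) := by
  show H.imp (H.mul x y) z = H.one ↔ H.imp x (H.imp y z) = H.one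
  rw [H.mul_imp]

lemma hoop_imp_mul_le (a b : M) : H.le (H.mul (H.imp a b) a) b := by
  show H.imp (H.mul (H.imp a b) a) b = H.one
  rw [H.mul_imp, H.imp_self]

lemma hoop_mul_rimp_le (a b : M) : H.le (H.mul a (H.rimp a b)) b := by
  apply H.hoop_le_of_rle
  rw [H.mul_rimp, H.rimp_self]

lemma hoop_mul_le_left (x y : M) : H.le (H.mul x y) x := by
  apply H.hoop_le_of_rle
  rw [H.mul_rimp, H.rimp_self, H.hoop_rimp_one]

lemma hoop_mul_le_right (x y : M) : H.le (H.mul x y) y := by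
  show H.imp (H.mul x y) y = H.one
  rw [H.mul_imp, H.imp_self, H.hoop_imp_one]

lemma hoop_le_imp_self (z e : M) : H.le z (H.imp e z) :=
  H.hoop_resid.mp (H.hoop_mul_le_left z e)

lemma hoop_imp_mono {a b c : M} (h : H.le b c) : H.le (H.imp a b) (H.imp a c) :=
  H.hoop_resid.mp (H.hoop_le_trans (H.hoop_imp_mul_le a b) h)

lemma hoop_rle_trans {a b c : M} (h1 : H.rimp a b = H.one) (h2 : H.rimp b c = H.one) :
    H.rimp a c = H.one :=
  H.hoop_rle_of_le (H.hoop_le_trans (H.hoop_le_of_rle h1) (H.hoop_le_of_rle h2))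

lemma hoop_mul_le_mul_left {a b : M} (c : M) (h : H.le a b) :
    H.le (H.mul a c) (H.mul b c) := by
  apply H.hoop_resid.mpr
  refine H.hoop_le_trans h (H.hoop_resid.mp ?_)
  exact H.hoop_le_refl _

lemma hoop_mul_le_mul_right {a b : M} (c : M) (h : H.le a b) :
    H.le (H.mul c a) (H.mul c b) := by
  apply H.hoop_le_of_rle
  rw [H.mul_rimp]
  have hb : H.rimp b (H.rimp c (H.mul c b)) = H.one := by
    have := H.mul_rimp c b (H.mul c b)
    rw [H.rimp_self] at this
    exact this.symm
  exact H.hoop_rle_trans (H.hoop_rle_of_le h) hb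

lemma hoop_mul_assoc (x y z : M) : H.mul (H.mul x y) z = H.mul x (H.mul y z) := by
  have key : ∀ w, H.imp (H.mul (H.mul x y) z) w = H.imp (H.mul x (H.mul y z)) w := by
    intro w
    simp only [H.mul_imp]
  apply H.hoop_le_antisymm
  · show H.imp (H.mul (H.mul x y) z) (H.mul x (H.mul y z)) = H.one
    rw [key, H.imp_self]
  · show H.imp (H.mul x (H.mul y z)) (H.mul (H.mul x y) z) = H.one
    rw [← key, H.imp_self]

/-- Product of a list, where the head is the rightmost factor. -/
def prodR (H : PseudoHoop M) : List M → M
  | [] => H.one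
  | e :: l => H.mul (H.prodR l) e

lemma prodR_append (l₁ l₂ : List M) :
    H.prodR (l₂ ++ l₁) = H.mul (H.prodR l₁) (H.prodR l₂) := by
  induction l₂ with
  | nil => simp [prodR, H.mul_one]
  | cons e l₂ ih => simp [prodR, ih, H.hoop_mul_assoc]

lemma prodR_singleton (x : M) : H.prodR [x] = x := by
  simp [prodR, H.one_mul]

lemma hoop_le_meet {c x y : M} (hx : H.le c x) (hy : H.le c y) :
    H.le c (H.mul (H.imp x y) x) := by
  have hx' : H.imp c x = H.one := hx
  have hc : c = H.mul (H.imp x c) x := by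
    calc c = H.mul (H.imp c x) c := by rw [hx', H.one_mul]
      _ = H.mul (H.imp x c) x := H.div1 c x
  have h1 : H.le (H.imp x c) (H.imp x y) := H.hoop_imp_mono hy
  have h2 := H.hoop_mul_le_mul_left x h1
  rw [← hc] at h2
  exact h2

/-- The main combinatorial lemma: if z dominates an interleaved product of elements
of F and u, and also one of elements of F and v, and (u→z)⊙(v→z) ≤ z always,
then z ∈ F. -/
lemma claimD (F : Set M) (hF : H.IsFilter F) (u v : M)
    (hKey : ∀ z, H.le (H.mul (H.imp u z) (H.imp v z)) z) :
    ∀ n (l₁ l₂ : List M) (z : M), l₁.length + l₂.length ≤ n →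
      (∀ e ∈ l₁, e ∈ F ∨ e = u) → (∀ e ∈ l₂, e ∈ F ∨ e = v) →
      H.le (H.prodR l₁) z → H.le (H.prodR l₂) z → z ∈ F := by
  obtain ⟨hone, hmul, hup⟩ := hF
  have step : ∀ (w z : M), w ∈ F → H.imp w z ∈ F → z ∈ F := by
    intro w z hw hwz
    exact hup _ (hmul _ hwz _ hw) z (H.hoop_imp_mul_le w z)
  intro n
  induction n with
  | zero =>
    intro l₁ l₂ z hlen h₁ h₂ hp₁ hp₂
    have : l₁ = [] := by
      cases l₁ with
      | nil => rfl
      | cons a l => simp at hlen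
    subst this
    have hz : H.imp H.one z = H.one := hp₁
    rw [H.hoop_one_imp] at hz
    rw [hz]; exact hone
  | succ n ih =>
    intro l₁ l₂ z hlen h₁ h₂ hp₁ hp₂
    cases l₁ with
    | nil =>
      have hz : H.imp H.one z = H.one := hp₁
      rw [H.hoop_one_imp] at hz
      rw [hz]; exact hone
    | cons e l₁' =>
      have hp₁' : H.le (H.prodR l₁') (H.imp e z) := by
        apply H.hoop_resid.mp
        exact hp₁
      have hzle : H.le z (H.imp e z) := H.hoop_le_imp_self z e
      rcases h₁ e (List.mem_cons_self (a := e) (l := l₁')) with heF | heu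
      · -- e ∈ F
        have hlen' : l₁'.length + l₂.length ≤ n := by
          simp [List.length] at hlen ⊢; omega
        have himp : H.imp e z ∈ F :=
          ih l₁' l₂ (H.imp e z) hlen'
            (fun x hx => h₁ x (List.mem_cons_of_mem _ hx)) h₂
            hp₁' (H.hoop_le_trans hp₂ hzle)
        exact step e z heF himp
      · -- e = u
        subst heu
        have hlen' : l₁'.length + l₂.length ≤ n := by
          simp [List.length] at hlen ⊢; omega
        have hu : H.imp e z ∈ F :=
          ih l₁' l₂ (H.imp e z) hlen'
            (fun x hx => h₁ x (List.mem_cons_of_mem _ hx)) h₂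
            hp₁' (H.hoop_le_trans hp₂ hzle)
        cases l₂ with
        | nil =>
          have hz : H.imp H.one z = H.one := hp₂
          rw [H.hoop_one_imp] at hz
          rw [hz]; exact hone
        | cons d l₂' =>
          have hp₂' : H.le (H.prodR l₂') (H.imp d z) := by
            apply H.hoop_resid.mp
            exact hp₂
          have hzled : H.le z (H.imp d z) := H.hoop_le_imp_self z d
          have hlen'' : (e :: l₁').length + l₂'.length ≤ n := by
            simp [List.length] at hlen ⊢; omega
          rcases h₂ d (List.mem_cons_self (a := d) (l := l₂')) with hdF | hdv
          · have himp : H.imp d z ∈ F :=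
              ih (e :: l₁') l₂' (H.imp d z) hlen'' h₁
                (fun x hx => h₂ x (List.mem_cons_of_mem _ hx))
                (H.hoop_le_trans hp₁ hzled) hp₂'
            exact step d z hdF himp
          · subst hdv
            have hv : H.imp d z ∈ F :=
              ih (e :: l₁') l₂' (H.imp d z) hlen'' h₁
                (fun x hx => h₂ x (List.mem_cons_of_mem _ hx))
                (H.hoop_le_trans hp₁ hzled) hp₂'
            exact hup _ (hmul _ hu _ hv) z (hKey z)

/-- The filter generated by F together with one extra element g. -/
def genF (F : Set M) (g : M) : Set M :=
  {x | ∃ l : List M, (∀ e ∈ l, e ∈ F ∨ e = g) ∧ H.le (H.prodR l) x}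

lemma genF_isFilter (F : Set M) (hF : H.IsFilter F) (g : M) :
    H.IsFilter (H.genF F g) := by
  obtain ⟨hone, hmul, hup⟩ := hF
  refine ⟨⟨[], by simp, H.hoop_le_refl _⟩, ?_, ?_⟩
  · rintro x ⟨lx, hlx, hx⟩ y ⟨ly, hly, hy⟩
    refine ⟨ly ++ lx, ?_, ?_⟩
    · intro e he
      rcases List.mem_append.mp he with h | h
      · exact hly e h
      · exact hlx e h
    · rw [H.prodR_append]
      exact H.hoop_le_trans (H.hoop_mul_le_mul_left _ hx)
        (H.hoop_mul_le_mul_right _ hy)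
  · rintro x ⟨lx, hlx, hx⟩ y hxy
    exact ⟨lx, hlx, H.hoop_le_trans hx hxy⟩

lemma subset_genF (F : Set M) (g : M) : F ⊆ H.genF F g := by
  intro x hx
  refine ⟨[x], by simp [hx], ?_⟩
  rw [H.prodR_singleton]
  exact H.hoop_le_refl x

lemma mem_genF (F : Set M) (g : M) : g ∈ H.genF F g := by
  refine ⟨[g], by simp, ?_⟩
  rw [H.prodR_singleton]
  exact H.hoop_le_refl g

lemma hoop_le_rimp {c d e : M} (h : H.le (H.mul c d) e) : H.le d (H.rimp c e) := by
  apply H.hoop_le_of_rle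
  rw [← H.mul_rimp]
  exact H.hoop_rle_of_le h

lemma hoop_key_ineq (hB : H.Basic) (a b z : M) :
    H.le (H.mul (H.imp (H.imp a b) z) (H.imp (H.imp b a) z)) z :=
  H.hoop_resid.mpr (hB.1 a b z)

lemma hoop_meet_le_left (p q : M) : H.le (H.meet p q) p :=
  H.hoop_mul_le_right _ _

lemma hoop_meet_le_right (p q : M) : H.le (H.meet p q) q :=
  H.hoop_imp_mul_le _ _

lemma p'_of_prime (hB : H.Basic) (F : Set M) (hF : H.IsFilter F)
    (hprime : ∀ F₁ F₂ : Set M, H.IsFilter F₁ → H.IsFilter F₂ → F₁ ∩ F₂ ⊆ F →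
      F₁ ⊆ F ∨ F₂ ⊆ F) :
    ∀ a b : M, H.imp a b ∈ F ∨ H.imp b a ∈ F := by
  intro a b
  have hsub : H.genF F (H.imp a b) ∩ H.genF F (H.imp b a) ⊆ F := by
    rintro x ⟨⟨l₁, h₁, hp₁⟩, ⟨l₂, h₂, hp₂⟩⟩
    exact H.claimD F hF (H.imp a b) (H.imp b a) (H.hoop_key_ineq hB a b)
      (l₁.length + l₂.length) l₁ l₂ x le_rfl h₁ h₂ hp₁ hp₂
  rcases hprime _ _ (H.genF_isFilter F hF (H.imp a b)) (H.genF_isFilter F hF (H.imp b a))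
      hsub with h | h
  · exact Or.inl (h (H.mem_genF F (H.imp a b)))
  · exact Or.inr (h (H.mem_genF F (H.imp b a)))

lemma p'_of_comp (hB : H.Basic) (F : Set M) (hF : H.IsFilter F)
    (hcomp : ∀ F₁ F₂ : Set M, H.IsFilter F₁ → H.IsFilter F₂ → F ⊆ F₁ → F ⊆ F₂ →
      F₁ ⊆ F₂ ∨ F₂ ⊆ F₁) :
    ∀ a b : M, H.imp a b ∈ F ∨ H.imp b a ∈ F := by
  intro a b
  have hKey := H.hoop_key_ineq hB a b
  rcases hcomp (H.genF F (H.imp a b)) (H.genF F (H.imp b a))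
      (H.genF_isFilter F hF _) (H.genF_isFilter F hF _)
      (H.subset_genF F _) (H.subset_genF F _) with h | h
  · left
    obtain ⟨l₂, h₂, hp₂⟩ := h (H.mem_genF F (H.imp a b))
    refine H.claimD F hF (H.imp a b) (H.imp b a) hKey
      ([H.imp a b].length + l₂.length) [H.imp a b] l₂ (H.imp a b) le_rfl
      (by intro e he; simp at he; exact Or.inr he) h₂ ?_ hp₂
    rw [H.prodR_singleton]
    exact H.hoop_le_refl _
  · right
    obtain ⟨l₁, h₁, hp₁⟩ := h (H.mem_genF F (H.imp b a))
    refine H.claimD F hF (H.imp a b) (H.imp b a) hKey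
      (l₁.length + [H.imp b a].length) l₁ [H.imp b a] (H.imp b a) le_rfl
      h₁ (by intro e he; simp at he; exact Or.inr he) hp₁ ?_
    rw [H.prodR_singleton]
    exact H.hoop_le_refl _

lemma prime_of_p' (F : Set M) (hF : H.IsFilter F)
    (hp' : ∀ a b : M, H.imp a b ∈ F ∨ H.imp b a ∈ F) :
    ∀ F₁ F₂ : Set M, H.IsFilter F₁ → H.IsFilter F₂ → F₁ ∩ F₂ ⊆ F →
      F₁ ⊆ F ∨ F₂ ⊆ F := by
  obtain ⟨hone, hmul, hup⟩ := hF
  intro F₁ F₂ h1 h2 hsub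
  by_cases hc : F₁ ⊆ F
  · exact Or.inl hc
  · right
    obtain ⟨a, haF₁, haF⟩ := Set.not_subset.mp hc
    intro b hbF₂
    set p := H.rimp (H.imp a b) b with hp
    set q := H.rimp (H.imp b a) a with hq
    have hap : H.le a p := H.hoop_le_rimp (H.hoop_imp_mul_le a b)
    have haq : H.le a q := H.hoop_le_rimp (H.hoop_mul_le_right _ _)
    have hbp : H.le b p := H.hoop_le_rimp (H.hoop_mul_le_right _ _)
    have hbq : H.le b q := H.hoop_le_rimp (H.hoop_imp_mul_le b a)
    have haw : H.le a (H.meet p q) := H.hoop_le_meet hap haq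
    have hbw : H.le b (H.meet p q) := H.hoop_le_meet hbp hbq
    have hw : H.meet p q ∈ F :=
      hsub ⟨h1.2.2 a haF₁ _ haw, h2.2.2 b hbF₂ _ hbw⟩
    rcases hp' a b with hu | hv
    · have ht : H.mul (H.imp a b) (H.meet p q) ∈ F := hmul _ hu _ hw
      refine hup _ ht b ?_
      exact H.hoop_le_trans (H.hoop_mul_le_mul_right _ (H.hoop_meet_le_left p q))
        (H.hoop_mul_rimp_le (H.imp a b) b)
    · exfalso
      apply haF
      have ht : H.mul (H.imp b a) (H.meet p q) ∈ F := hmul _ hv _ hw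
      refine hup _ ht a ?_
      exact H.hoop_le_trans (H.hoop_mul_le_mul_right _ (H.hoop_meet_le_right p q))
        (H.hoop_mul_rimp_le (H.imp b a) a)

lemma comp_of_p' (F : Set M) (hF : H.IsFilter F)
    (hp' : ∀ a b : M, H.imp a b ∈ F ∨ H.imp b a ∈ F) :
    ∀ F₁ F₂ : Set M, H.IsFilter F₁ → H.IsFilter F₂ → F ⊆ F₁ → F ⊆ F₂ →
      F₁ ⊆ F₂ ∨ F₂ ⊆ F₁ := by
  intro F₁ F₂ h1 h2 hs₁ hs₂
  by_cases hc : F₁ ⊆ F₂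
  · exact Or.inl hc
  · right
    obtain ⟨a, haF₁, haF₂⟩ := Set.not_subset.mp hc
    intro b hbF₂
    rcases hp' a b with hu | hv
    · have : H.mul (H.imp a b) a ∈ F₁ := h1.2.1 _ (hs₁ hu) _ haF₁
      exact h1.2.2 _ this b (H.hoop_imp_mul_le a b)
    · exfalso
      apply haF₂
      have : H.mul (H.imp b a) b ∈ F₂ := h2.2.1 _ (hs₂ hv) _ hbF₂
      exact h2.2.2 _ this a (H.hoop_imp_mul_le b a)

end PseudoHoop

theorem basicPseudoHoop_prime_iff_comparable {M : Type u} (H : PseudoHoop M)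
    (hB : H.Basic) (F : Set M) (hF : H.IsFilter F) :
    ((∀ F₁ F₂ : Set M, H.IsFilter F₁ → H.IsFilter F₂ → F₁ ∩ F₂ ⊆ F → F₁ ⊆ F ∨ F₂ ⊆ F) ↔
      (∀ F₁ F₂ : Set M, H.IsFilter F₁ → H.IsFilter F₂ → F ⊆ F₁ → F ⊆ F₂ →
        F₁ ⊆ F₂ ∨ F₂ ⊆ F₁)) ∧
    (∀ P Q R : Set M, H.IsPrime P → H.IsPrime Q → H.IsPrime R → P ⊆ Q → P ⊆ R →
      Q ⊆ R ∨ R ⊆ Q) := by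
  constructor
  · constructor
    · intro hprime
      exact H.comp_of_p' F hF (H.p'_of_prime hB F hF hprime)
    · intro hcomp
      exact H.prime_of_p' F hF (H.p'_of_comp hB F hF hcomp)
  · intro P Q R hP hQ hR hPQ hPR
    exact H.comp_of_p' P hP.1 (H.p'_of_prime hB P hP.1 hP.2) Q R hQ.1 hR.1 hPQ hPR
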